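/- Let F : ℝ → ℝ be differentiable on [0,1] with F(u) ≥ 0, F′(u) ≤ 1, and F(u) + (1−u)F′(u) ≥ 0 for all u ∈ [0,1]. Define the numerical flux G(u,v) = F(u)(1 − v + F(v))/(1 − u + F(u)) for u ∈ [0,1), v ∈ [0,1]. Then: (i) G(u,u) = F(u) for all u ∈ [0,1) (consistency); (ii) for each fixed v ∈ [0,1], the map u ↦ G(u,v) is nondecreasing on [0,1); (iii) for each fixed u ∈ [0,1), the map v ↦ G(u,v) is nonincreasing on [0,1]. Hence the relaxed scheme ρ_i^{n+1} = ρ_i^n − (Δt/Δx)(G(ρ_i^n, ρ_{i+1}^n) − G(ρ_{i−1}^n, ρ_i^n)) is a consistent monotone scheme under the condition F(ρ) + (1−ρ)F′(ρ) ≥ 0. -/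

import Mathlib

/-- The numerical flux G(u,v) = F(u)(1-v+F(v))/(1-u+F(u)) of the relaxed scheme
is consistent, nondecreasing in u and nonincreasing in v, provided F ≥ 0,
F' ≤ 1 and F(u) + (1-u)F'(u) ≥ 0 on [0,1]; hence the relaxed scheme is a
consistent monotone scheme. -/
theorem stmt16 (F F' : ℝ → ℝ)
    (hdiff : ∀ u ∈ Set.Icc (0 : ℝ) 1, HasDerivAt F (F' u) u)
    (hpos : ∀ u ∈ Set.Icc (0 : ℝ) 1, 0 ≤ F u)
    (hF'le : ∀ u ∈ Set.Icc (0 : ℝ) 1, F' u ≤ 1)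
    (hsub : ∀ u ∈ Set.Icc (0 : ℝ) 1, 0 ≤ F u + (1 - u) * F' u) :
    let G : ℝ → ℝ → ℝ := fun u v => F u * (1 - v + F v) / (1 - u + F u)
    (∀ u ∈ Set.Ico (0 : ℝ) 1, G u u = F u) ∧
    (∀ v ∈ Set.Icc (0 : ℝ) 1, MonotoneOn (fun u => G u v) (Set.Ico 0 1)) ∧
    (∀ u ∈ Set.Ico (0 : ℝ) 1, AntitoneOn (fun v => G u v) (Set.Icc 0 1)) := by
  intro G
  have hIcoIcc : Set.Ico (0:ℝ) 1 ⊆ Set.Icc 0 1 := Set.Ico_subset_Icc_self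
  have hden : ∀ u ∈ Set.Ico (0:ℝ) 1, 0 < 1 - u + F u := by
    intro u hu
    have h1 : 0 < 1 - u := by linarith [hu.2]
    have h2 : 0 ≤ F u := hpos u (hIcoIcc hu)
    linarith
  -- p v = 1 - v + F v, nonneg on Icc
  have hpnn : ∀ v ∈ Set.Icc (0:ℝ) 1, 0 ≤ 1 - v + F v := by
    intro v hv
    have := hpos v hv
    linarith [hv.2]
  -- h u = F u / (1 - u + F u)
  set h : ℝ → ℝ := fun u => F u / (1 - u + F u) with hh
  have hhderiv : ∀ u ∈ Set.Ico (0:ℝ) 1,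
      HasDerivAt h ((F' u * (1 - u + F u) - F u * (-1 + F' u)) / (1 - u + F u) ^ 2) u := by
    intro u hu
    have hF := hdiff u (hIcoIcc hu)
    have hg : HasDerivAt (fun x => 1 - x + F x) (-1 + F' u) u :=
      ((hasDerivAt_id u).const_sub 1).add hF
    exact hF.div hg (ne_of_gt (hden u hu))
  have hmono : MonotoneOn h (Set.Ico 0 1) := by
    apply monotoneOn_of_deriv_nonneg (convex_Ico 0 1)
    · intro u hu
      exact (hhderiv u hu).continuousAt.continuousWithinAt
    · intro u hu
      rw [interior_Ico] at hu
      exact (hhderiv u (Set.Ioo_subset_Ico_self hu)).differentiableAt.differentiableWithinAt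
    · intro u hu
      rw [interior_Ico] at hu
      have hu' := Set.Ioo_subset_Ico_self hu
      rw [(hhderiv u hu').deriv]
      have hnum : 0 ≤ F' u * (1 - u + F u) - F u * (-1 + F' u) := by
        have := hsub u (hIcoIcc hu')
        nlinarith
      positivity
  refine ⟨?_, ?_, ?_⟩
  · intro u hu
    simp only [G]
    rw [mul_div_assoc, div_self (ne_of_gt (hden u hu)), mul_one]
  · intro v hv
    intro a ha b hb hab
    show G a v ≤ G b v
    have : G a v = h a * (1 - v + F v) := by
      simp only [G, hh, mul_div_right_comm]
    rw [this]
    have : G b v = h b * (1 - v + F v) := by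
      simp only [G, hh, mul_div_right_comm]
    rw [this]
    exact mul_le_mul_of_nonneg_right (hmono ha hb hab) (hpnn v hv)
  · intro u hu
    have hc : 0 ≤ h u := div_nonneg (hpos u (hIcoIcc hu)) (le_of_lt (hden u hu))
    have hpanti : AntitoneOn (fun v => 1 - v + F v) (Set.Icc 0 1) := by
      apply antitoneOn_of_deriv_nonpos (convex_Icc 0 1)
      · intro v hv
        exact (((hasDerivAt_id v).const_sub 1).add (hdiff v hv)).continuousAt.continuousWithinAt
      · intro v hv
        rw [interior_Icc] at hv
        exact (((hasDerivAt_id v).const_sub 1).add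
          (hdiff v (Set.Ioo_subset_Icc_self hv))).differentiableAt.differentiableWithinAt
      · intro v hv
        rw [interior_Icc] at hv
        have hd : HasDerivAt (fun v => 1 - v + F v) (-1 + F' v) v := by
          exact ((hasDerivAt_id v).const_sub 1).add
            (hdiff v (Set.Ioo_subset_Icc_self hv))
        rw [hd.deriv]
        have := hF'le v (Set.Ioo_subset_Icc_self hv)
        linarith
    intro a ha b hb hab
    have e1 : G u a = h u * (1 - a + F a) := by
      simp only [G, hh, mul_div_right_comm]
    have e2 : G u b = h u * (1 - b + F b) := by
      simp only [G, hh, mul_div_right_comm]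
    show G u b ≤ G u a
    rw [e1, e2]
    exact mul_le_mul_of_nonneg_left (hpanti ha hb hab) hc
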